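/- If ŝ : [0,∞) → ℝ is differentiable with ŝ'(t) = P(ŝ(t), s_l, s_h, e(t)) where P is the scalar projection operator and ŝ(0) ∈ [s_l, s_h], then ŝ(t) ∈ [s_l, s_h] for all t ≥ 0. -/

import Mathlib

/-- Scalar projection operator. -/
noncomputable def proj (s sl sh e : ℝ) : ℝ :=
  if (s ≥ sh ∧ e > 0) ∨ (s ≤ sl ∧ e < 0) then 0 else e

lemma aux_bound (c : ℝ) (f f' : ℝ → ℝ) (hf : ∀ t, HasDerivAt f (f' t) t)
    (hcond : ∀ t, c ≤ f t → f' t ≤ 0) (h0 : f 0 ≤ c) : ∀ t ≥ 0, f t ≤ c := by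
  have hcont : Continuous f :=
    continuous_iff_continuousAt.mpr fun t => (hf t).continuousAt
  intro t₀ ht₀
  by_contra h
  push_neg at h
  set S := {s | s ∈ Set.Icc (0 : ℝ) t₀ ∧ f s ≤ c} with hSdef
  have hS0 : (0 : ℝ) ∈ S := ⟨⟨le_refl 0, ht₀⟩, h0⟩
  have hbdd : BddAbove S := ⟨t₀, fun s hs => hs.1.2⟩
  have hclosed : IsClosed S := by
    have : S = Set.Icc (0 : ℝ) t₀ ∩ {s | f s ≤ c} := rfl
    rw [this]
    exact isClosed_Icc.inter (isClosed_le hcont continuous_const)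
  set T := sSup S with hT
  have hTS : T ∈ S := hclosed.csSup_mem ⟨0, hS0⟩ hbdd
  have hTlt : T < t₀ := by
    rcases lt_or_eq_of_le hTS.1.2 with h' | h'
    · exact h'
    · rw [h'] at hTS; exact absurd hTS.2 (not_le.mpr h)
  have hgt : ∀ s ∈ Set.Ioc T t₀, c < f s := by
    intro s hs
    by_contra hle
    push_neg at hle
    have hsS : s ∈ S := ⟨⟨le_trans hTS.1.1 hs.1.le, hs.2⟩, hle⟩
    exact absurd (le_csSup hbdd hsS) (not_le.mpr hs.1)
  have hanti : AntitoneOn f (Set.Icc T t₀) := by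
    apply antitoneOn_of_deriv_nonpos (convex_Icc _ _) hcont.continuousOn
    · intro s _; exact (hf s).differentiableAt.differentiableWithinAt
    · intro s hs
      rw [interior_Icc] at hs
      rw [(hf s).deriv]
      exact hcond s (hgt s ⟨hs.1, hs.2.le⟩).le
  have hle2 := hanti (Set.left_mem_Icc.mpr hTlt.le) (Set.right_mem_Icc.mpr hTlt.le) hTlt.le
  linarith [hTS.2]

/-- Forward invariance of the parameter box under the projected update law. -/
theorem proj_ode_invariance (sl sh : ℝ) (hlh : sl < sh)
    (e : ℝ → ℝ) (he : Continuous e)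
    (shat : ℝ → ℝ)
    (hderiv : ∀ t, HasDerivAt shat (proj (shat t) sl sh (e t)) t)
    (h0 : shat 0 ∈ Set.Icc sl sh) :
    ∀ t ≥ 0, shat t ∈ Set.Icc sl sh := by
  intro t ht
  constructor
  · -- lower bound: apply aux_bound to -shat with c = -sl
    have hupper := aux_bound (-sl) (fun t => -shat t)
      (fun t => -(proj (shat t) sl sh (e t)))
      (fun t => (hderiv t).neg)
      (by
        intro t hle
        have hle' : shat t ≤ sl := by linarith
        unfold proj
        split_ifs with hc
        · simp
        · push_neg at hc
          have := hc.2 hle'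
          linarith)
      (by simp [h0.1])
    have := hupper t ht
    linarith
  · -- upper bound
    have hupper := aux_bound sh shat (fun t => proj (shat t) sl sh (e t))
      hderiv
      (by
        intro t hle
        unfold proj
        split_ifs with hc
        · exact le_rfl
        · push_neg at hc
          exact hc.1 hle)
      h0.2
    exact hupper t ht
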